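/- arXiv:math/0212149 — 2 statements merged into one kernel-verified Lean document; each statement's English description precedes it below -/
import Mathlib

section
/- Duality of discrete orthogonal polynomials: for $1 \le k \le N-1$, letting $\overline{k} = N - k$ and $\overline{\pi}_{N,\overline{k}}$ the monic orthogonal polynomial of degree $\overline{k}$ for the dual weights $\overline{w}_{N,j}$ (defined by $w_{N,j} \overline{w}_{N,j} \prod_{n \ne j}(x_{N,j} - x_{N,n})^2 = 1$), one has the identity $\overline{\pi}_{N,\overline{k}}(z) = \sum_{j=0}^{N-1} w_{N,j} \left[ c_{N,k-1}^{(k-1)} \right]^2 \pi_{N,k-1}(x_{N,j}) \prod_{n \ne j} (z - x_{N,n})$ for all $z$. -/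
open Polynomial Finset

lemma phi_sum {N : ℕ} (x : Fin N → ℝ) (hx : Function.Injective x) (h : Polynomial ℝ)
    (hdeg : h.natDegree < N) :
    ∑ j, h.eval (x j) / (∏ n ∈ Finset.univ.erase j, (x j - x n)) = h.coeff (N - 1) := by
  have hcard : (Finset.univ : Finset (Fin N)).card = N := by simp
  have hdeg' : h.degree < (Finset.univ : Finset (Fin N)).card := by
    rw [hcard]
    exact lt_of_le_of_lt degree_le_natDegree (by exact_mod_cast hdeg)
  have hint : Lagrange.interpolate Finset.univ x (fun i => h.eval (x i)) = h :=
    (Lagrange.eq_interpolate (Function.Injective.injOn hx) hdeg').symm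
  conv_rhs => rw [← hint]
  rw [Lagrange.interpolate_apply, Polynomial.finset_sum_coeff]
  refine Finset.sum_congr rfl fun j _ => ?_
  have hbasis : Lagrange.basis Finset.univ x j =
      Polynomial.C ((∏ n ∈ Finset.univ.erase j, (x j - x n))⁻¹) *
        ∏ n ∈ Finset.univ.erase j, (X - C (x n)) := by
    rw [Lagrange.basis]
    simp_rw [Lagrange.basisDivisor]
    rw [Finset.prod_mul_distrib, ← map_prod, Finset.prod_inv_distrib]
  have hellM : (∏ n ∈ Finset.univ.erase j, ((X : ℝ[X]) - C (x n))).Monic :=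
    monic_prod_of_monic _ _ fun n _ => monic_X_sub_C _
  have helldeg : (∏ n ∈ Finset.univ.erase j, ((X : ℝ[X]) - C (x n))).natDegree = N - 1 := by
    rw [natDegree_prod _ _ fun n _ => X_sub_C_ne_zero (x n)]
    simp [Finset.card_erase_of_mem]
  have hellcoeff : (∏ n ∈ Finset.univ.erase j, ((X : ℝ[X]) - C (x n))).coeff (N - 1) = 1 := by
    rw [← helldeg]; exact hellM.coeff_natDegree
  rw [hbasis, coeff_C_mul, coeff_C_mul, hellcoeff]
  ring

/-- Duality of discrete orthogonal polynomials: the monic orthogonal polynomial of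
degree `N - k` for the dual weights is given explicitly in terms of the monic
orthogonal polynomial of degree `k-1` for the original weights. -/
theorem stmt_13 (N : ℕ) (x w : Fin N → ℝ)
    (hx : StrictMono x) (hw : ∀ j, 0 < w j)
    (k : ℕ) (hk1 : 1 ≤ k) (hk2 : k ≤ N - 1)
    (wbar : Fin N → ℝ)
    (hdual : ∀ j : Fin N,
      w j * wbar j * ∏ n ∈ Finset.univ.erase j, (x j - x n) ^ 2 = 1)
    (pi : Polynomial ℝ) (hpiM : pi.Monic) (hpideg : pi.natDegree = k - 1)
    (hpiortho : ∀ q : Polynomial ℝ, q.degree < ((k - 1 : ℕ) : ℕ) →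
      ∑ j, pi.eval (x j) * q.eval (x j) * w j = 0)
    (c : ℝ) (hc : 0 < c)
    (hnorm : c ^ 2 * ∑ j, pi.eval (x j) * pi.eval (x j) * w j = 1)
    (pibar : Polynomial ℝ) (hpibarM : pibar.Monic)
    (hpibardeg : pibar.natDegree = N - k)
    (hpibarortho : ∀ q : Polynomial ℝ, q.degree < ((N - k : ℕ) : ℕ) →
      ∑ j, pibar.eval (x j) * q.eval (x j) * wbar j = 0) :
    pibar = ∑ j, Polynomial.C (w j * c ^ 2 * pi.eval (x j)) *
      ∏ n ∈ Finset.univ.erase j, (Polynomial.X - Polynomial.C (x n)) := by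
  have hN : 2 ≤ N := by omega
  have hinj : Function.Injective x := hx.injective
  set L' : Fin N → ℝ := fun j => ∏ n ∈ Finset.univ.erase j, (x j - x n) with hL'def
  have hL'ne : ∀ j, L' j ≠ 0 := by
    intro j
    refine Finset.prod_ne_zero_iff.mpr fun n hn => ?_
    have : n ≠ j := (Finset.mem_erase.mp hn).1
    exact sub_ne_zero_of_ne fun hmm => this (hinj hmm.symm)
  have hsq : ∀ j, ∏ n ∈ Finset.univ.erase j, (x j - x n) ^ 2 = (L' j) ^ 2 := by
    intro j; rw [hL'def]; rw [← Finset.prod_pow]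
  have hwbar : ∀ j, wbar j = (w j * (L' j) ^ 2)⁻¹ := by
    intro j
    have h := hdual j
    rw [hsq j] at h
    exact eq_inv_of_mul_eq_one_left (by rw [← h]; ring)
  have hwbarpos : ∀ j, 0 < wbar j := by
    intro j
    rw [hwbar j]
    exact inv_pos.mpr (mul_pos (hw j) (pow_two_pos_of_ne_zero (hL'ne j)))
  set P : Polynomial ℝ := ∑ j, Polynomial.C (w j * c ^ 2 * pi.eval (x j)) *
      ∏ n ∈ Finset.univ.erase j, (Polynomial.X - Polynomial.C (x n)) with hPdef
  -- evaluation of P at nodes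
  have hevalell : ∀ i j : Fin N, i ≠ j →
      Polynomial.eval (x i) (∏ n ∈ Finset.univ.erase j, ((X : ℝ[X]) - C (x n))) = 0 := by
    intro i j hij
    rw [Polynomial.eval_prod]
    refine Finset.prod_eq_zero (Finset.mem_erase.mpr ⟨hij, Finset.mem_univ i⟩) ?_
    simp
  have hevalell_self : ∀ j : Fin N,
      Polynomial.eval (x j) (∏ n ∈ Finset.univ.erase j, ((X : ℝ[X]) - C (x n))) = L' j := by
    intro j
    rw [Polynomial.eval_prod]
    simp [hL'def]
  have hevalP : ∀ i : Fin N, P.eval (x i) = w i * c ^ 2 * pi.eval (x i) * L' i := by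
    intro i
    rw [hPdef, Polynomial.eval_finset_sum]
    rw [Finset.sum_eq_single i]
    · rw [Polynomial.eval_mul, Polynomial.eval_C, hevalell_self]
    · intro j _ hji
      rw [Polynomial.eval_mul, hevalell i j (Ne.symm hji), mul_zero]
    · intro h; exact absurd (Finset.mem_univ i) h
  have hdegP : P.natDegree ≤ N - 1 := by
    refine Polynomial.natDegree_sum_le_of_forall_le _ _ fun j _ => ?_
    refine le_trans (Polynomial.natDegree_mul_le) ?_
    rw [Polynomial.natDegree_C, zero_add]
    rw [natDegree_prod _ _ fun n _ => X_sub_C_ne_zero (x n)]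
    simp [Finset.card_erase_of_mem]
  set r : Polynomial ℝ := pibar - P with hrdef
  -- downward induction on coefficients
  have key : ∀ i : ℕ, i ≤ k → r.natDegree ≤ N - 1 - i := by
    intro i
    induction i with
    | zero =>
      intro _
      simpa using le_trans (Polynomial.natDegree_sub_le _ _)
        (max_le (by omega) hdegP)
    | succ i ih =>
      intro hik
      have hi : r.natDegree ≤ N - 1 - i := ih (by omega)
      rw [Polynomial.natDegree_le_iff_coeff_eq_zero]
      intro m hm
      rcases lt_or_eq_of_le (Nat.succ_le_of_lt hm) with hm' | hm'
      · exact Polynomial.coeff_eq_zero_of_natDegree_lt (by omega)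
      · -- m = N - 1 - i  (since N-1-(i+1)+1 = N-1-i)
        have hmeq : m = N - 1 - i := by omega
        subst hmeq
        -- Phi applied to r * X^i
        have hΦr : ∑ j, (r.eval (x j) * (x j) ^ i) / L' j = r.coeff (N - 1 - i) := by
          have h1 : (r * X ^ i).natDegree < N := by
            have hle := Polynomial.natDegree_mul_le (p := r) (q := (X : ℝ[X]) ^ i)
            rw [Polynomial.natDegree_X_pow] at hle
            omega
          have h2 := phi_sum x hinj (r * X ^ i) h1
          simp only [Polynomial.eval_mul, Polynomial.eval_pow, Polynomial.eval_X] at h2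
          rw [h2, Polynomial.coeff_mul_X_pow']
          rw [if_pos (by omega)]
        have hΦpibar : ∑ j, (pibar.eval (x j) * (x j) ^ i) / L' j = pibar.coeff (N - 1 - i) := by
          have h1 : (pibar * X ^ i).natDegree < N := by
            have hle := Polynomial.natDegree_mul_le (p := pibar) (q := (X : ℝ[X]) ^ i)
            rw [Polynomial.natDegree_X_pow, hpibardeg] at hle
            omega
          have h2 := phi_sum x hinj (pibar * X ^ i) h1
          simp only [Polynomial.eval_mul, Polynomial.eval_pow, Polynomial.eval_X] at h2
          rw [h2, Polynomial.coeff_mul_X_pow']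
          rw [if_pos (by omega)]
        have hΦP : ∑ j, (P.eval (x j) * (x j) ^ i) / L' j
            = c ^ 2 * ∑ j, pi.eval (x j) * (x j) ^ i * w j := by
          rw [Finset.mul_sum]
          refine Finset.sum_congr rfl fun j _ => ?_
          rw [hevalP j]
          field_simp [hL'ne j]
        have hsplit : ∑ j, (r.eval (x j) * (x j) ^ i) / L' j
            = ∑ j, (pibar.eval (x j) * (x j) ^ i) / L' j
              - ∑ j, (P.eval (x j) * (x j) ^ i) / L' j := by
          rw [← Finset.sum_sub_distrib]
          refine Finset.sum_congr rfl fun j _ => ?_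
          rw [hrdef, Polynomial.eval_sub]
          ring
        rw [hrdef] at hΦr ⊢
        rw [Polynomial.coeff_sub] at hΦr ⊢
        rw [← hΦr, hsplit, hΦpibar, hΦP]
        rcases lt_or_eq_of_le (Nat.succ_le_of_lt (Nat.lt_of_succ_le hik)) with hik' | hik'
        · -- i < k - 1
          have hc1 : pibar.coeff (N - 1 - i) = 0 :=
            Polynomial.coeff_eq_zero_of_natDegree_lt (by omega)
          have hc2 : ∑ j, pi.eval (x j) * (x j) ^ i * w j = 0 := by
            have := hpiortho (X ^ i) (by
              rw [Polynomial.degree_X_pow]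
              exact_mod_cast (by omega : i < k - 1))
            simpa using this
          rw [hc1, hc2, mul_zero, sub_zero]
        · -- i = k - 1 (hik' : i+1 = k, i.e. k = i+1?)
          have hieq : i = k - 1 := by omega
          have hc1 : pibar.coeff (N - 1 - i) = 1 := by
            have h' : N - 1 - i = pibar.natDegree := by rw [hpibardeg]; omega
            rw [h']; exact hpibarM.coeff_natDegree
          have hdpi : pi.degree = (i : WithBot ℕ) := by
            rw [Polynomial.degree_eq_natDegree hpiM.ne_zero, hpideg, hieq]
          have hq : ((X : ℝ[X]) ^ i - pi).degree < ((k - 1 : ℕ) : WithBot ℕ) := by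
            have hne : ((X : ℝ[X]) ^ i) ≠ 0 := pow_ne_zero i Polynomial.X_ne_zero
            have hdeq : ((X : ℝ[X]) ^ i).degree = pi.degree := by
              rw [Polynomial.degree_X_pow, hdpi]
            have hlc : ((X : ℝ[X]) ^ i).leadingCoeff = pi.leadingCoeff := by
              rw [Polynomial.leadingCoeff_X_pow]; exact hpiM.leadingCoeff.symm
            have hd := Polynomial.degree_sub_lt hdeq hne hlc
            rw [Polynomial.degree_X_pow] at hd
            rw [← hieq]
            exact hd
          have hc2 : ∑ j, pi.eval (x j) * (x j) ^ i * w j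
              = ∑ j, pi.eval (x j) * pi.eval (x j) * w j := by
            have h0 := hpiortho _ hq
            have : ∑ j, pi.eval (x j) * (x j) ^ i * w j
                - ∑ j, pi.eval (x j) * pi.eval (x j) * w j
                = ∑ j, pi.eval (x j) * (((X : ℝ[X]) ^ i - pi).eval (x j)) * w j := by
              rw [← Finset.sum_sub_distrib]
              refine Finset.sum_congr rfl fun j _ => ?_
              simp [Polynomial.eval_sub, Polynomial.eval_pow]
              ring
            have h2 := this.trans h0
            linarith [h2]
          rw [hc1, hc2, hnorm, sub_self]
  have hrdeg : r.natDegree ≤ N - 1 - k := key k le_rfl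
  -- r vanishes at all nodes
  have hrzero : ∀ j, r.eval (x j) = 0 := by
    have h1 : ∑ j, pibar.eval (x j) * r.eval (x j) * wbar j = 0 := by
      refine hpibarortho r ?_
      refine lt_of_le_of_lt Polynomial.degree_le_natDegree ?_
      exact_mod_cast (by omega : r.natDegree < N - k)
    have h2 : ∑ j, P.eval (x j) * r.eval (x j) * wbar j = 0 := by
      have heach : ∀ j : Fin N, P.eval (x j) * r.eval (x j) * wbar j
          = c ^ 2 * ((pi.eval (x j) * r.eval (x j)) / L' j) := by
        intro j
        rw [hevalP j, hwbar j]
        field_simp [hL'ne j, ne_of_gt (hw j)]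
      have hmul := Polynomial.natDegree_mul_le (p := pi) (q := r)
      have hΦ : ∑ j, (pi.eval (x j) * r.eval (x j)) / L' j = (pi * r).coeff (N - 1) := by
        have h2' := phi_sum x hinj (pi * r) (by omega)
        simpa only [Polynomial.eval_mul] using h2'
      have hco : (pi * r).coeff (N - 1) = 0 :=
        Polynomial.coeff_eq_zero_of_natDegree_lt (by omega)
      simp only [heach]
      rw [← Finset.mul_sum, hΦ, hco, mul_zero]
    have hsum : ∑ j, r.eval (x j) * r.eval (x j) * wbar j = 0 := by
      have : ∀ j : Fin N, r.eval (x j) * r.eval (x j) * wbar j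
          = pibar.eval (x j) * r.eval (x j) * wbar j - P.eval (x j) * r.eval (x j) * wbar j := by
        intro j
        rw [hrdef, Polynomial.eval_sub]
        ring
      simp only [this]
      rw [Finset.sum_sub_distrib, h1, h2, sub_zero]
    intro j
    have hterm : r.eval (x j) * r.eval (x j) * wbar j = 0 := by
      have hnn : ∀ i ∈ Finset.univ, (0:ℝ) ≤ r.eval (x i) * r.eval (x i) * wbar i :=
        fun i _ => mul_nonneg (mul_self_nonneg _) (le_of_lt (hwbarpos i))
      exact (Finset.sum_eq_zero_iff_of_nonneg hnn).mp hsum j (Finset.mem_univ j)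
    have := mul_eq_zero.mp hterm
    rcases this with h | h
    · exact (mul_self_eq_zero).mp h
    · exact absurd h (ne_of_gt (hwbarpos j))
  have hrz : r = 0 := by
    refine Polynomial.eq_zero_of_natDegree_lt_card_of_eval_eq_zero r hinj hrzero ?_
    rw [Fintype.card_fin]
    omega
  have := sub_eq_zero.mp hrz
  rw [hPdef] at this
  exact this
end

section
/- Node-value duality identity: for $1 \le k \le N-1$, $\overline{k} = N-k$, and any node index $l \in \{0, \dots, N-1\}$, $\overline{\pi}_{N,\overline{k}}(x_{N,l}) = \left[ c_{N,k-1}^{(k-1)} \right]^2 w_{N,l} \prod_{n \ne l} (x_{N,l} - x_{N,n}) \cdot \pi_{N,k-1}(x_{N,l})$. -/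
open Polynomial Finset

/-- Leading coefficient of the Lagrange interpolant: for a polynomial of degree `< N`,
its coefficient at `N - 1` equals the weighted sum of its node values. -/
private lemma coeff_interp_sum {N : ℕ} (x : Fin N → ℝ) (hinj : Function.Injective x)
    (P : Polynomial ℝ) (hP : P.degree < (N : WithBot ℕ)) :
    P.coeff (N - 1) = ∑ j, P.eval (x j) * (∏ n ∈ Finset.univ.erase j, (x j - x n))⁻¹ := by
  classical
  have hvs : Set.InjOn x (Finset.univ : Finset (Fin N)) := fun a _ b _ h => hinj h
  have hcard : #(Finset.univ : Finset (Fin N)) = N := by simp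
  have hP' : P.degree < #(Finset.univ : Finset (Fin N)) := by rw [hcard]; exact_mod_cast hP
  have key := Lagrange.eq_interpolate hvs hP'
  conv_lhs => rw [key]
  rw [Lagrange.interpolate_apply, Polynomial.finset_sum_coeff]
  refine Finset.sum_congr rfl fun j _ => ?_
  rw [Polynomial.coeff_C_mul]
  congr 1
  have hdeg : (Lagrange.basis Finset.univ x j).natDegree = N - 1 := by
    rw [Lagrange.natDegree_basis hvs (Finset.mem_univ j), hcard]
  have hlc : (Lagrange.basis Finset.univ x j).coeff (N - 1) =
      (Lagrange.basis Finset.univ x j).leadingCoeff := by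
    rw [Polynomial.leadingCoeff, hdeg]
  rw [hlc]
  unfold Lagrange.basis
  rw [Polynomial.leadingCoeff_prod, ← Finset.prod_inv_distrib]
  refine Finset.prod_congr rfl fun i hi => ?_
  rw [Lagrange.basisDivisor, Polynomial.leadingCoeff_mul, Polynomial.leadingCoeff_C,
    (Polynomial.monic_X_sub_C (x i)).leadingCoeff, mul_one]

/-- Node-value duality identity relating values of a discrete orthogonal polynomial
and the corresponding dual polynomial at any node. -/
theorem stmt_14 (N : ℕ) (x w : Fin N → ℝ)
    (hx : StrictMono x) (hw : ∀ j, 0 < w j)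
    (k : ℕ) (hk1 : 1 ≤ k) (hk2 : k ≤ N - 1)
    (wbar : Fin N → ℝ)
    (hdual : ∀ j : Fin N,
      w j * wbar j * ∏ n ∈ Finset.univ.erase j, (x j - x n) ^ 2 = 1)
    (pi : Polynomial ℝ) (hpiM : pi.Monic) (hpideg : pi.natDegree = k - 1)
    (hpiortho : ∀ q : Polynomial ℝ, q.degree < ((k - 1 : ℕ) : ℕ) →
      ∑ j, pi.eval (x j) * q.eval (x j) * w j = 0)
    (c : ℝ) (hc : 0 < c)
    (hnorm : c ^ 2 * ∑ j, pi.eval (x j) * pi.eval (x j) * w j = 1)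
    (pibar : Polynomial ℝ) (hpibarM : pibar.Monic)
    (hpibardeg : pibar.natDegree = N - k)
    (hpibarortho : ∀ q : Polynomial ℝ, q.degree < ((N - k : ℕ) : ℕ) →
      ∑ j, pibar.eval (x j) * q.eval (x j) * wbar j = 0)
    (l : Fin N) :
    pibar.eval (x l) = c ^ 2 * w l *
      (∏ n ∈ Finset.univ.erase l, (x l - x n)) * pi.eval (x l) := by
  classical
  have hN : 2 ≤ N := by omega
  have hinj : Function.Injective x := hx.injective
  have hvs : Set.InjOn x (Finset.univ : Finset (Fin N)) := fun a _ b _ h => hinj h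
  set d : Fin N → ℝ := fun j => ∏ n ∈ Finset.univ.erase j, (x j - x n) with hd
  have hdne : ∀ j, d j ≠ 0 := by
    intro j
    refine Finset.prod_ne_zero_iff.mpr fun n hn => sub_ne_zero_of_ne fun h => ?_
    exact (Finset.mem_erase.mp hn).1 (hinj h).symm
  have hdual' : ∀ j, w j * wbar j * d j ^ 2 = 1 := by
    intro j
    have := hdual j
    rwa [Finset.prod_pow] at this
  have hd2pos : ∀ j, 0 < d j ^ 2 := fun j =>
    lt_of_le_of_ne (sq_nonneg _) (Ne.symm (pow_ne_zero 2 (hdne j)))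
  have hwbar : ∀ j, 0 < wbar j := by
    intro j
    nlinarith [hdual' j, mul_pos (hw j) (hd2pos j)]
  have hkey : ∀ j, w j * d j * wbar j = (d j)⁻¹ := by
    intro j
    field_simp [hdne j]
    linear_combination hdual' j
  set H : Fin N → ℝ := fun j => pi.eval (x j) * w j * d j with hH
  set R : Polynomial ℝ := Lagrange.interpolate Finset.univ x H with hR
  have hReval : ∀ j, R.eval (x j) = H j := fun j =>
    Lagrange.eval_interpolate_at_node H hvs (Finset.mem_univ j)
  have hRdeglt : R.degree < (N : WithBot ℕ) := by
    have := Lagrange.degree_interpolate_lt H hvs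
    rw [Finset.card_univ, Fintype.card_fin] at this
    exact this
  -- key computation: the (N-1-m)-th coefficient of R as a weighted moment of pi
  have lemB : ∀ m : ℕ, m ≤ k - 1 → R.degree < ((N - m : ℕ) : WithBot ℕ) →
      R.coeff (N - 1 - m) = ∑ j, pi.eval (x j) * (x j) ^ m * w j := by
    intro m hm hdeg
    have hmN : m ≤ N - 2 := by omega
    have hdeg' : (R * X ^ m).degree < (N : WithBot ℕ) := by
      rcases eq_or_ne R 0 with h | h
      · rw [h, zero_mul, Polynomial.degree_zero]
        exact WithBot.bot_lt_coe N
      · rw [← Polynomial.natDegree_lt_iff_degree_lt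
          (mul_ne_zero h (pow_ne_zero _ Polynomial.X_ne_zero))]
        rw [Polynomial.natDegree_mul h (pow_ne_zero _ Polynomial.X_ne_zero),
          Polynomial.natDegree_X_pow]
        have := (Polynomial.natDegree_lt_iff_degree_lt h).mpr hdeg
        omega
    have hcoeff := coeff_interp_sum x hinj (R * X ^ m) hdeg'
    have e1 : (R * X ^ m).coeff (N - 1) = R.coeff (N - 1 - m) := by
      have e0 := Polynomial.coeff_mul_X_pow R m (N - 1 - m)
      rwa [show N - 1 - m + m = N - 1 by omega] at e0
    rw [e1] at hcoeff
    rw [hcoeff]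
    refine Finset.sum_congr rfl fun j _ => ?_
    rw [Polynomial.eval_mul, Polynomial.eval_pow, Polynomial.eval_X, hReval j]
    have : H j * x j ^ m * (d j)⁻¹ =
        pi.eval (x j) * x j ^ m * w j * (d j * (d j)⁻¹) := by rw [hH]; ring
    rw [this, mul_inv_cancel₀ (hdne j), mul_one]
  -- top coefficients of R vanish
  have claim : ∀ m : ℕ, m ≤ k - 1 → R.degree < ((N - m : ℕ) : WithBot ℕ) := by
    intro m
    induction m with
    | zero => intro _; simpa using hRdeglt
    | succ m ih =>
      intro hm
      have h1 : R.degree < ((N - m : ℕ) : WithBot ℕ) := ih (by omega)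
      have h2 : R.coeff (N - 1 - m) = 0 := by
        rw [lemB m (by omega) h1]
        have hq : ((X : Polynomial ℝ) ^ m).degree < ((k - 1 : ℕ) : ℕ) := by
          rw [Polynomial.degree_X_pow]
          exact_mod_cast (by omega : m < k - 1)
        simpa using hpiortho (X ^ m) hq
      rw [Polynomial.degree_lt_iff_coeff_zero]
      intro i hi
      rcases eq_or_lt_of_le hi with h | h
      · have e : i = N - 1 - m := by omega
        rw [e]; exact h2
      · exact (Polynomial.degree_lt_iff_coeff_zero R _).mp h1 i (by omega)
  have hRtop : R.degree < ((N - (k - 1) : ℕ) : WithBot ℕ) := claim (k - 1) le_rfl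
  -- the leading coefficient of R equals 1/c²
  have hXpi : ((X : Polynomial ℝ) ^ (k - 1) - pi).degree < ((k - 1 : ℕ) : WithBot ℕ) := by
    have hd1 : ((X : Polynomial ℝ) ^ (k - 1)).degree = pi.degree := by
      rw [Polynomial.degree_X_pow, Polynomial.degree_eq_natDegree hpiM.ne_zero, hpideg]
    have hlc1 : ((X : Polynomial ℝ) ^ (k - 1)).leadingCoeff = pi.leadingCoeff := by
      rw [Polynomial.leadingCoeff_X_pow]; exact hpiM.symm
    have h := Polynomial.degree_sub_lt hd1 (pow_ne_zero _ Polynomial.X_ne_zero) hlc1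
    rwa [Polynomial.degree_X_pow] at h
  have hRk : R.coeff (N - k) = (c ^ 2)⁻¹ := by
    have h2 := lemB (k - 1) le_rfl hRtop
    have e : N - 1 - (k - 1) = N - k := by omega
    rw [e] at h2
    rw [h2]
    have hsplit : ∑ j, pi.eval (x j) * (x j) ^ (k - 1) * w j =
        (∑ j, pi.eval (x j) * pi.eval (x j) * w j) +
        ∑ j, pi.eval (x j) * ((X : Polynomial ℝ) ^ (k - 1) - pi).eval (x j) * w j := by
      rw [← Finset.sum_add_distrib]
      refine Finset.sum_congr rfl fun j _ => ?_
      rw [Polynomial.eval_sub, Polynomial.eval_pow, Polynomial.eval_X]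
      ring
    rw [hsplit, hpiortho _ hXpi, add_zero]
    have hc2 : (c : ℝ) ^ 2 ≠ 0 := by positivity
    field_simp
    simp only [pow_two] at hnorm ⊢
    linear_combination hnorm
  -- define S = c² R, it is "monic of degree N-k" in the coefficient sense
  set S : Polynomial ℝ := Polynomial.C (c ^ 2) * R with hS
  have hSeval : ∀ j, S.eval (x j) = c ^ 2 * H j := by
    intro j; rw [hS, Polynomial.eval_mul, Polynomial.eval_C, hReval]
  have hSlt : S.degree < ((N - k + 1 : ℕ) : WithBot ℕ) := by
    have e : N - (k - 1) = N - k + 1 := by omega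
    rw [← e]
    have hCle : S.degree ≤ R.degree := by
      refine le_trans (Polynomial.degree_mul_le _ _) ?_
      calc (Polynomial.C (c ^ 2)).degree + R.degree ≤ 0 + R.degree :=
            add_le_add Polynomial.degree_C_le le_rfl
        _ = R.degree := zero_add _
    exact lt_of_le_of_lt hCle hRtop
  have hScoeff : S.coeff (N - k) = 1 := by
    rw [hS, Polynomial.coeff_C_mul, hRk, mul_inv_cancel₀ (by positivity : (c : ℝ) ^ 2 ≠ 0)]
  -- D = pibar - S has degree < N - k
  set D : Polynomial ℝ := pibar - S with hD
  have hDdeg : D.degree < ((N - k : ℕ) : WithBot ℕ) := by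
    rw [Polynomial.degree_lt_iff_coeff_zero]
    intro i hi
    rcases eq_or_lt_of_le hi with h | h
    · rw [hD, Polynomial.coeff_sub, ← h, hScoeff]
      have : pibar.coeff (N - k) = 1 := by
        rw [← hpibardeg]; exact hpibarM.coeff_natDegree
      rw [this, sub_self]
    · have h1 : pibar.coeff i = 0 :=
        Polynomial.coeff_eq_zero_of_natDegree_lt (by rw [hpibardeg]; omega)
      have h2 : S.coeff i = 0 := by
        refine Polynomial.coeff_eq_zero_of_degree_lt (lt_of_lt_of_le hSlt ?_)
        exact_mod_cast (by omega : N - k + 1 ≤ i)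
      rw [hD, Polynomial.coeff_sub, h1, h2, sub_zero]
  -- S is wbar-orthogonal to polynomials of degree < N - k
  have hSorth : ∀ q : Polynomial ℝ, q.degree < ((N - k : ℕ) : WithBot ℕ) →
      ∑ j, S.eval (x j) * q.eval (x j) * wbar j = 0 := by
    intro q hq
    have hπq : (pi * q).degree < ((N - 1 : ℕ) : WithBot ℕ) := by
      calc (pi * q).degree ≤ pi.degree + q.degree := Polynomial.degree_mul_le _ _
        _ < ((k - 1 : ℕ) : WithBot ℕ) + ((N - k : ℕ) : WithBot ℕ) := by
            rw [Polynomial.degree_eq_natDegree hpiM.ne_zero, hpideg]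
            exact WithBot.add_lt_add_left (WithBot.coe_ne_bot) hq
        _ = ((N - 1 : ℕ) : WithBot ℕ) := by
            rw [← Nat.cast_add]
            congr 1
            omega
    have h0 : (pi * q).coeff (N - 1) = 0 := Polynomial.coeff_eq_zero_of_degree_lt hπq
    have hsum := coeff_interp_sum x hinj (pi * q)
      (lt_trans hπq (by exact_mod_cast (by omega : N - 1 < N)))
    rw [h0] at hsum
    have hterm : ∀ j : Fin N, S.eval (x j) * q.eval (x j) * wbar j =
        c ^ 2 * ((pi * q).eval (x j) * (d j)⁻¹) := by
      intro j
      rw [hSeval j, Polynomial.eval_mul, hH, ← hkey j]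
      ring
    rw [Finset.sum_congr rfl (fun j _ => hterm j), ← Finset.mul_sum, ← hsum, mul_zero]
  -- conclude D vanishes at the nodes
  have horthD : ∑ j, D.eval (x j) * D.eval (x j) * wbar j = 0 := by
    have h1 := hpibarortho D (by exact_mod_cast hDdeg)
    have h2 := hSorth D hDdeg
    have hterm : ∀ j : Fin N, D.eval (x j) * D.eval (x j) * wbar j =
        pibar.eval (x j) * D.eval (x j) * wbar j - S.eval (x j) * D.eval (x j) * wbar j := by
      intro j; rw [hD, Polynomial.eval_sub]; ring
    rw [Finset.sum_congr rfl (fun j _ => hterm j), Finset.sum_sub_distrib, h1, h2, sub_zero]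
  have hDl : D.eval (x l) = 0 := by
    have hterm : ∀ j ∈ Finset.univ, 0 ≤ D.eval (x j) * D.eval (x j) * wbar j := fun j _ =>
      mul_nonneg (mul_self_nonneg _) (le_of_lt (hwbar j))
    have h0 := (Finset.sum_eq_zero_iff_of_nonneg hterm).mp horthD l (Finset.mem_univ l)
    rcases mul_eq_zero.mp h0 with h | h
    · exact mul_self_eq_zero.mp h
    · exact absurd h (ne_of_gt (hwbar l))
  have hfin : pibar.eval (x l) = S.eval (x l) := by
    have := hDl
    rw [hD, Polynomial.eval_sub, sub_eq_zero] at this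
    exact this
  rw [hfin, hSeval l, hH]
  ring
end
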